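/- arXiv:1005.1082 — 2 statements merged into one kernel-verified Lean document; each statement's English description precedes it below -/
import Mathlib

section
/- Let f : ℝⁿ → ℝ ∪ {±∞} be a convex function and let x ∈ ℝⁿ be a point where f is finite. Then for any v ∈ ℝⁿ, one has v ∈ rb ∂f(x) if and only if (v, −1) ∈ rb N_{epi f}(x, f(x)). -/
open MeasureTheory Set

/-- The convex subdifferential of an extended-real-valued function `f` at a point `x`. -/
noncomputable def subdiff {n : ℕ} (f : EuclideanSpace ℝ (Fin n) → EReal)
    (x : EuclideanSpace ℝ (Fin n)) : Set (EuclideanSpace ℝ (Fin n)) :=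
  {v | f x ≠ ⊤ ∧ f x ≠ ⊥ ∧ ∀ y, f x + ((inner ℝ v (y - x) : ℝ) : EReal) ≤ f y}

/-- The normal cone to a set `S ⊆ ℝⁿ × ℝ` at a point `p ∈ S` (inner product on `ℝⁿ × ℝ`
taken componentwise). -/
def normalConeProd {n : ℕ} (S : Set (EuclideanSpace ℝ (Fin n) × ℝ))
    (p : EuclideanSpace ℝ (Fin n) × ℝ) : Set (EuclideanSpace ℝ (Fin n) × ℝ) :=
  {w | ∀ q ∈ S, (inner ℝ w.1 (q.1 - p.1) : ℝ) + w.2 * (q.2 - p.2) ≤ 0}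

section Helpers

variable {n : ℕ} {f : EuclideanSpace ℝ (Fin n) → EReal}
  {x : EuclideanSpace ℝ (Fin n)} {r : ℝ}

private lemma mem_subdiff_iff (hr : f x = (r : EReal)) {v : EuclideanSpace ℝ (Fin n)} :
    v ∈ subdiff f x ↔ ∀ y (b : ℝ), f y ≤ (b : EReal) →
      r + (inner ℝ v (y - x) : ℝ) ≤ b := by
  constructor
  · rintro ⟨-, -, h⟩ y b hb
    have h2 := (h y).trans hb
    rw [hr, ← EReal.coe_add] at h2
    exact_mod_cast h2
  · intro h
    refine ⟨by simp [hr], by simp [hr], fun y => ?_⟩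
    rw [hr, ← EReal.coe_add]
    obtain htop | hne := eq_or_ne (f y) ⊤
    · rw [htop]; exact le_top
    obtain hbot | hne2 := eq_or_ne (f y) ⊥
    · exfalso
      have := h y (r + (inner ℝ v (y - x) : ℝ) - 1) (by rw [hbot]; exact bot_le)
      linarith
    · have hb : f y = (((f y).toReal : ℝ) : EReal) := (EReal.coe_toReal hne hne2).symm
      rw [hb]
      exact_mod_cast h y _ (le_of_eq hb)

private lemma cone_mem_iff (hr : f x = (r : EReal))
    {u : EuclideanSpace ℝ (Fin n)} {t : ℝ} (ht : t < 0) :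
    (u, t) ∈ normalConeProd {p : EuclideanSpace ℝ (Fin n) × ℝ | f p.1 ≤ (p.2 : EReal)} (x, r) ↔
      (-t)⁻¹ • u ∈ subdiff f x := by
  have hs : (0:ℝ) < -t := by linarith
  have hinv : -t * (-t)⁻¹ = 1 := mul_inv_cancel₀ hs.ne'
  rw [mem_subdiff_iff hr]
  constructor
  · intro h y b hb
    have h2 := h (y, b) hb
    simp only at h2
    rw [real_inner_smul_left]
    have h4 : (-t)⁻¹ * (inner ℝ u (y - x) : ℝ) ≤ b - r := by
      rw [inv_mul_le_iff₀ hs]; nlinarith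
    linarith
  · intro h q hq
    have h2 := h q.1 q.2 hq
    rw [real_inner_smul_left] at h2
    have h3 : (-t)⁻¹ * (inner ℝ u (q.1 - x) : ℝ) ≤ q.2 - r := by linarith
    have h4 := mul_le_mul_of_nonneg_left h3 hs.le
    rw [← mul_assoc, hinv, one_mul] at h4
    nlinarith

private lemma horiz_mem (hr : f x = (r : EReal)) {v w : EuclideanSpace ℝ (Fin n)}
    (hv : v ∈ subdiff f x)
    (hw : (w, (0:ℝ)) ∈ normalConeProd
      {p : EuclideanSpace ℝ (Fin n) × ℝ | f p.1 ≤ (p.2 : EReal)} (x, r)) :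
    v + w ∈ subdiff f x := by
  rw [mem_subdiff_iff hr] at hv ⊢
  intro y b hb
  have h1 := hv y b hb
  have h2 := hw (y, b) hb
  simp only [zero_mul, add_zero] at h2
  rw [inner_add_left]
  linarith

private lemma mem_intrinsicInterior_iff' {E : Type*} [NormedAddCommGroup E] [NormedSpace ℝ E]
    {s : Set E} {z : E} :
    z ∈ intrinsicInterior ℝ s ↔ z ∈ affineSpan ℝ s ∧
      ∃ ε > 0, ∀ y ∈ (affineSpan ℝ s : Set E), dist y z < ε → y ∈ s := by
  constructor
  · rintro ⟨⟨z', hz'⟩, hint, rfl⟩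
    refine ⟨hz', ?_⟩
    rw [mem_interior_iff_mem_nhds, Metric.mem_nhds_iff] at hint
    obtain ⟨ε, hε, hball⟩ := hint
    refine ⟨ε, hε, fun y hy hdist => ?_⟩
    exact hball (show (⟨y, hy⟩ : affineSpan ℝ s) ∈ Metric.ball _ _ by
      rw [Metric.mem_ball, Subtype.dist_eq]; exact hdist)
  · rintro ⟨hz, ε, hε, h⟩
    refine ⟨⟨z, hz⟩, ?_, rfl⟩
    rw [mem_interior_iff_mem_nhds, Metric.mem_nhds_iff]
    refine ⟨ε, hε, ?_⟩
    rintro ⟨y, hy⟩ hdist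
    exact h y hy (by rwa [Metric.mem_ball, Subtype.dist_eq] at hdist)

private lemma approx_lemma {E : Type*} [NormedAddCommGroup E] [NormedSpace ℝ E] {u v : E}
    {t δ : ℝ} (hδ : δ ≤ 1/2) (h1 : ‖u - v‖ < δ) (h2 : |t + 1| < δ) :
    t < 0 ∧ ‖(-t)⁻¹ • u - v‖ < 2 * δ * (1 + ‖v‖) := by
  obtain ⟨ha, hb⟩ := abs_lt.1 h2
  have ht : t < 0 := by linarith
  have hs : (1:ℝ)/2 < -t := by linarith
  have hδ0 : 0 < δ := lt_of_le_of_lt (norm_nonneg _) h1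
  refine ⟨ht, ?_⟩
  have key : (-t)⁻¹ • u - v = (-t)⁻¹ • (u - v + (t+1) • v) := by
    match_scalars <;> field_simp [ht.ne] <;> ring
  rw [key, norm_smul, Real.norm_eq_abs, abs_of_pos (inv_pos.2 (by linarith : (0:ℝ) < -t))]
  have hn : ‖u - v + (t+1) • v‖ < δ * (1 + ‖v‖) := by
    calc ‖u - v + (t+1) • v‖ ≤ ‖u - v‖ + ‖(t+1) • v‖ := norm_add_le _ _
    _ = ‖u - v‖ + |t+1| * ‖v‖ := by rw [norm_smul, Real.norm_eq_abs]
    _ < δ + δ * ‖v‖ := by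
        have := mul_le_mul_of_nonneg_right h2.le (norm_nonneg v)
        nlinarith [norm_nonneg v]
    _ = δ * (1 + ‖v‖) := by ring
  have hinv2 : (-t)⁻¹ < 2 := by
    rw [inv_lt_iff_one_lt_mul₀ (by linarith : (0:ℝ) < -t)]; linarith
  calc (-t)⁻¹ * ‖u - v + (t+1) • v‖ ≤ 2 * ‖u - v + (t+1) • v‖ :=
        mul_le_mul_of_nonneg_right hinv2.le (norm_nonneg _)
  _ < 2 * (δ * (1 + ‖v‖)) := by linarith
  _ = 2 * δ * (1 + ‖v‖) := by ring

/-- The affine map `q ↦ q.1 + q.2 • v + v` on `ℝⁿ × ℝ`. -/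
noncomputable def Gmap {n : ℕ} (v : EuclideanSpace ℝ (Fin n)) :
    (EuclideanSpace ℝ (Fin n) × ℝ) →ᵃ[ℝ] EuclideanSpace ℝ (Fin n) :=
  (LinearMap.fst ℝ (EuclideanSpace ℝ (Fin n)) ℝ +
    (LinearMap.snd ℝ (EuclideanSpace ℝ (Fin n)) ℝ).smulRight v).toAffineMap +
    AffineMap.const ℝ (EuclideanSpace ℝ (Fin n) × ℝ) v

/-- The affine map `z ↦ (z, -1)`. -/
noncomputable def gmap (n : ℕ) :
    EuclideanSpace ℝ (Fin n) →ᵃ[ℝ] (EuclideanSpace ℝ (Fin n) × ℝ) :=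
  (LinearMap.inl ℝ (EuclideanSpace ℝ (Fin n)) ℝ).toAffineMap +
    AffineMap.const ℝ (EuclideanSpace ℝ (Fin n)) ((0 : EuclideanSpace ℝ (Fin n)), (-1:ℝ))

private lemma Gmap_apply {n : ℕ} (v : EuclideanSpace ℝ (Fin n))
    (q : EuclideanSpace ℝ (Fin n) × ℝ) : Gmap v q = q.1 + q.2 • v + v := by
  simp [Gmap]

private lemma gmap_apply {n : ℕ} (z : EuclideanSpace ℝ (Fin n)) : gmap n z = (z, -1) := by
  simp [gmap, Prod.ext_iff]

end Helpers

/-- For a convex `f : ℝⁿ → ℝ ∪ {±∞}`, finite at `x` with value `r`, a vector `v` lies in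
the relative boundary of `∂f(x)` iff `(v, -1)` lies in the relative boundary of the
normal cone to `epi f` at `(x, f x)`. -/
theorem stmt3 {n : ℕ} (f : EuclideanSpace ℝ (Fin n) → EReal)
    (hconv : Convex ℝ {p : EuclideanSpace ℝ (Fin n) × ℝ | f p.1 ≤ (p.2 : EReal)})
    (x : EuclideanSpace ℝ (Fin n)) (r : ℝ) (hr : f x = (r : EReal))
    (v : EuclideanSpace ℝ (Fin n)) :
    v ∈ intrinsicFrontier ℝ (subdiff f x) ↔
      (v, (-1 : ℝ)) ∈ intrinsicFrontier ℝ
        (normalConeProd {p : EuclideanSpace ℝ (Fin n) × ℝ | f p.1 ≤ (p.2 : EReal)} (x, r)) := by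
  classical
  set S : Set (EuclideanSpace ℝ (Fin n)) := subdiff f x with hS
  set N : Set (EuclideanSpace ℝ (Fin n) × ℝ) :=
    normalConeProd {p : EuclideanSpace ℝ (Fin n) × ℝ | f p.1 ≤ (p.2 : EReal)} (x, r) with hN
  have hden : (0:ℝ) < 2 * (1 + ‖v‖) := by positivity
  -- membership of slices of the cone
  have hmem1 : ∀ z : EuclideanSpace ℝ (Fin n), z ∈ S ↔ (z, (-1:ℝ)) ∈ N := by
    intro z
    rw [hN, cone_mem_iff hr (by norm_num : (-1:ℝ) < 0)]
    norm_num [hS]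
  -- dist computations
  have hdist_slice : ∀ z w : EuclideanSpace ℝ (Fin n),
      dist (z, (-1:ℝ)) (w, (-1:ℝ)) = dist z w := by
    intro z w
    rw [Prod.dist_eq, dist_self, max_eq_left dist_nonneg]
  -- (A) closure equivalence
  have hA : (v, (-1:ℝ)) ∈ closure N ↔ v ∈ closure S := by
    rw [Metric.mem_closure_iff, Metric.mem_closure_iff]
    constructor
    · intro h ε hε
      set δ := min (1/2) (ε / (2 * (1 + ‖v‖))) with hδdef
      have hδpos : 0 < δ := lt_min (by norm_num) (div_pos hε hden)
      obtain ⟨⟨u, t⟩, hqN, hd⟩ := h δ hδpos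
      rw [Prod.dist_eq, max_lt_iff] at hd
      obtain ⟨hd1, hd2⟩ := hd
      have h1 : ‖u - v‖ < δ := by rw [← dist_eq_norm, dist_comm]; exact hd1
      have h2 : |t + 1| < δ := by
        have he : dist (-1 : ℝ) t = |t + 1| := by
          rw [Real.dist_eq, abs_sub_comm]; ring_nf
        rwa [he] at hd2
      obtain ⟨ht, hz⟩ := approx_lemma (min_le_left _ _) h1 h2
      refine ⟨(-t)⁻¹ • u, (cone_mem_iff hr ht).1 hqN, ?_⟩
      rw [dist_comm, dist_eq_norm]
      calc ‖(-t)⁻¹ • u - v‖ < 2 * δ * (1 + ‖v‖) := hz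
      _ ≤ 2 * (ε / (2 * (1 + ‖v‖))) * (1 + ‖v‖) := by
          have := min_le_right (1/2 : ℝ) (ε / (2 * (1 + ‖v‖)))
          nlinarith [norm_nonneg v]
      _ = ε := by field_simp
    · intro h ε hε
      obtain ⟨z, hzS, hd⟩ := h ε hε
      exact ⟨(z, -1), (hmem1 z).1 hzS, by rwa [hdist_slice]⟩
  -- (B) relative interior equivalence
  have hB : (v, (-1:ℝ)) ∈ intrinsicInterior ℝ N ↔ v ∈ intrinsicInterior ℝ S := by
    constructor
    · -- from ri N to ri S
      rw [mem_intrinsicInterior_iff', mem_intrinsicInterior_iff']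
      rintro ⟨hspan, ε, hε, hball⟩
      have hvN : (v, (-1:ℝ)) ∈ N := hball _ hspan (by simp [hε])
      have hvS : v ∈ S := (hmem1 v).2 hvN
      -- affineSpan S maps into affineSpan N under z ↦ (z, -1)
      have hle : affineSpan ℝ S ≤ AffineSubspace.comap (gmap n) (affineSpan ℝ N) := by
        rw [affineSpan_le]
        intro z hz
        rw [SetLike.mem_coe, AffineSubspace.mem_comap, gmap_apply]
        exact subset_affineSpan ℝ N ((hmem1 z).1 hz)
      refine ⟨subset_affineSpan ℝ S hvS, ε, hε, fun y hy hd => ?_⟩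
      have hy' : (y, (-1:ℝ)) ∈ affineSpan ℝ N := by
        have := hle hy
        rwa [AffineSubspace.mem_comap, gmap_apply] at this
      have : (y, (-1:ℝ)) ∈ N := hball _ hy' (by rwa [hdist_slice])
      exact (hmem1 y).2 this
    · -- from ri S to ri N
      rw [mem_intrinsicInterior_iff', mem_intrinsicInterior_iff']
      rintro ⟨hvspan, ε, hε, hball⟩
      have hvS : v ∈ S := hball v hvspan (by simp [hε])
      -- affineSpan N maps into affineSpan S under q ↦ q.1 + q.2 • v + v
      have hle : affineSpan ℝ N ≤ AffineSubspace.comap (Gmap v) (affineSpan ℝ S) := by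
        rw [affineSpan_le]
        rintro ⟨u, t⟩ hq
        rw [SetLike.mem_coe, AffineSubspace.mem_comap, Gmap_apply]
        rcases lt_trichotomy t 0 with ht | rfl | ht
        · have hzS : (-t)⁻¹ • u ∈ S := (cone_mem_iff hr ht).1 hq
          have ht0 : -t ≠ 0 := by simp; linarith
          have hmem := AffineSubspace.smul_vsub_vadd_mem (affineSpan ℝ S) (-t)
            (subset_affineSpan ℝ S hzS) (subset_affineSpan ℝ S hvS) (subset_affineSpan ℝ S hvS)
          have heq : u + t • v + v = (-t) • ((-t)⁻¹ • u -ᵥ v) +ᵥ v := by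
            rw [vsub_eq_sub, vadd_eq_add]
            match_scalars <;> field_simp [ht.ne] <;> ring
          rwa [heq]
        · have : v + u ∈ S := horiz_mem hr hvS hq
          simpa [add_comm] using subset_affineSpan ℝ S this
        · exfalso
          have hx1 : ((x, r + 1) : EuclideanSpace ℝ (Fin n) × ℝ) ∈
              {p : EuclideanSpace ℝ (Fin n) × ℝ | f p.1 ≤ (p.2 : EReal)} := by
            rw [Set.mem_setOf_eq, hr]
            exact_mod_cast (by linarith : r ≤ r + 1)
          have h2 := hq _ hx1
          simp only [sub_self, inner_zero_right, add_sub_cancel_left, mul_one, zero_add] at h2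
          linarith
      set δ := min (1/2) (ε / (2 * (1 + ‖v‖))) with hδdef
      have hδpos : 0 < δ := lt_min (by norm_num) (div_pos hε hden)
      refine ⟨subset_affineSpan ℝ N ((hmem1 v).1 hvS), δ, hδpos, ?_⟩
      rintro ⟨u, t⟩ hq hd
      rw [Prod.dist_eq, max_lt_iff] at hd
      obtain ⟨hd1, hd2⟩ := hd
      have h1 : ‖u - v‖ < δ := by rw [← dist_eq_norm]; exact hd1
      have h2 : |t + 1| < δ := by
        have he : dist t (-1 : ℝ) = |t + 1| := by rw [Real.dist_eq]; ring_nf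
        rwa [he] at hd2
      obtain ⟨ht, hzclose⟩ := approx_lemma (min_le_left _ _) h1 h2
      have ht0 : -t ≠ 0 := by simp; linarith
      -- the rescaled point lies in the affine span of S
      have hGq : u + t • v + v ∈ affineSpan ℝ S := by
        have := hle hq
        rwa [AffineSubspace.mem_comap, Gmap_apply] at this
      have hzspan : (-t)⁻¹ • u ∈ affineSpan ℝ S := by
        have hmem := AffineSubspace.smul_vsub_vadd_mem (affineSpan ℝ S) ((-t)⁻¹)
          hGq (subset_affineSpan ℝ S hvS) (subset_affineSpan ℝ S hvS)
        have heq : (-t)⁻¹ • u = (-t)⁻¹ • ((u + t • v + v) -ᵥ v) +ᵥ v := by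
          rw [vsub_eq_sub, vadd_eq_add]
          match_scalars <;> field_simp [ht.ne] <;> ring
        rwa [heq]
      have hzS : (-t)⁻¹ • u ∈ S := by
        apply hball _ hzspan
        rw [dist_eq_norm]
        calc ‖(-t)⁻¹ • u - v‖ < 2 * δ * (1 + ‖v‖) := hzclose
        _ ≤ 2 * (ε / (2 * (1 + ‖v‖))) * (1 + ‖v‖) := by
            have := min_le_right (1/2 : ℝ) (ε / (2 * (1 + ‖v‖)))
            nlinarith [norm_nonneg v]
        _ = ε := by field_simp
      exact (cone_mem_iff hr ht).2 hzS
  rw [← closure_diff_intrinsicInterior, ← closure_diff_intrinsicInterior,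
    Set.mem_diff, Set.mem_diff, hA, hB]
end

section
/- Let A be an m × n real matrix with rows a₁, …, a_m and let b ∈ ℝᵐ, defining the polyhedron P = {x ∈ ℝⁿ : ⟨aᵢ, x⟩ ≤ bᵢ for all i}. Then for Lebesgue-almost every vector v ∈ ℝⁿ, if the linear program max{⟨v, x⟩ : x ∈ P} attains its maximum, then the maximizer x̄ is unique and there exists a dual vector λ ∈ ℝᵐ with λ ≥ 0, Σᵢ λᵢ aᵢ = v, λᵢ = 0 for every i with ⟨aᵢ, x̄⟩ < bᵢ, and λᵢ > 0 for every i with ⟨aᵢ, x̄⟩ = bᵢ (strict complementary slackness). -/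
open MeasureTheory Set

section auxcone

variable {n m : ℕ}

/-- The cone generated by the vectors `a i`, `i ∈ I`. -/
def coneOf (a : Fin m → EuclideanSpace ℝ (Fin n)) (I : Finset (Fin m)) :
    Set (EuclideanSpace ℝ (Fin n)) :=
  {x | ∃ l : Fin m → ℝ, (∀ i, 0 ≤ l i) ∧ (∀ i, i ∉ I → l i = 0) ∧ (∑ i, l i • a i) = x}

lemma coneOf_convex (a : Fin m → EuclideanSpace ℝ (Fin n)) (I : Finset (Fin m)) :
    Convex ℝ (coneOf a I) := by
  rintro x ⟨lx, hlx0, hlxI, hlxs⟩ y ⟨ly, hly0, hlyI, hlys⟩ p q hp hq hpq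
  refine ⟨fun i => p * lx i + q * ly i,
    fun i => by have h1 := hlx0 i; have h2 := hly0 i; positivity,
    fun i hi => by show p * lx i + q * ly i = 0; rw [hlxI i hi, hlyI i hi]; ring, ?_⟩
  rw [← hlxs, ← hlys, Finset.smul_sum, Finset.smul_sum, ← Finset.sum_add_distrib]
  exact Finset.sum_congr rfl fun i _ => by rw [add_smul, smul_smul, smul_smul]

lemma coneOf_zero_mem (a : Fin m → EuclideanSpace ℝ (Fin n)) (I : Finset (Fin m)) :
    (0 : EuclideanSpace ℝ (Fin n)) ∈ coneOf a I :=
  ⟨0, fun _ => le_refl 0, fun _ _ => rfl, by simp⟩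

lemma coneOf_smul_mem (a : Fin m → EuclideanSpace ℝ (Fin n)) (I : Finset (Fin m))
    {t : ℝ} (ht : 0 ≤ t) {x : EuclideanSpace ℝ (Fin n)} (hx : x ∈ coneOf a I) :
    t • x ∈ coneOf a I := by
  obtain ⟨l, hl0, hlI, hls⟩ := hx
  refine ⟨fun i => t * l i, fun i => mul_nonneg ht (hl0 i),
    fun i hi => by show t * l i = 0; rw [hlI i hi, mul_zero], ?_⟩
  rw [← hls, Finset.smul_sum]
  exact Finset.sum_congr rfl fun i _ => by rw [smul_smul]

lemma coneOf_gen_mem (a : Fin m → EuclideanSpace ℝ (Fin n)) (I : Finset (Fin m))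
    {i : Fin m} (hi : i ∈ I) : a i ∈ coneOf a I := by
  refine ⟨fun j => if j = i then 1 else 0, fun j => by positivity,
    fun j hj => by
      show (if j = i then (1:ℝ) else 0) = 0
      exact if_neg (fun h => hj (by rw [h]; exact hi)), ?_⟩
  simp [ite_smul]

lemma coneOf_subset_span (a : Fin m → EuclideanSpace ℝ (Fin n)) (I : Finset (Fin m)) :
    coneOf a I ⊆ (Submodule.span ℝ (a '' ↑I) : Submodule ℝ (EuclideanSpace ℝ (Fin n))) := by
  rintro x ⟨l, hl0, hlI, rfl⟩
  refine Submodule.sum_mem _ fun i _ => ?_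
  by_cases hi : i ∈ I
  · exact Submodule.smul_mem _ _ (Submodule.subset_span ⟨i, hi, rfl⟩)
  · rw [hlI i hi, zero_smul]; exact Submodule.zero_mem _

end auxcone

/-- Consider the polyhedron `P = {x : ⟨aᵢ, x⟩ ≤ bᵢ for all i}`.  For almost every
`v ∈ ℝⁿ`, if the linear program `max {⟨v, x⟩ : x ∈ P}` attains its maximum at `x̄`, then
`x̄` is the unique maximizer and there is a dual vector `λ ≥ 0` with `Σ λᵢ aᵢ = v`,
`λᵢ = 0` whenever `⟨aᵢ, x̄⟩ < bᵢ`, and `λᵢ > 0` whenever `⟨aᵢ, x̄⟩ = bᵢ`. -/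
theorem stmt13 {n m : ℕ} (a : Fin m → EuclideanSpace ℝ (Fin n)) (b : Fin m → ℝ) :
    ∀ᵐ v : EuclideanSpace ℝ (Fin n), ∀ xbar : EuclideanSpace ℝ (Fin n),
      (∀ i, (inner ℝ (a i) xbar : ℝ) ≤ b i) →
      (∀ x : EuclideanSpace ℝ (Fin n), (∀ i, (inner ℝ (a i) x : ℝ) ≤ b i) →
        (inner ℝ v x : ℝ) ≤ inner ℝ v xbar) →
      ((∀ x' : EuclideanSpace ℝ (Fin n), (∀ i, (inner ℝ (a i) x' : ℝ) ≤ b i) →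
          (∀ x : EuclideanSpace ℝ (Fin n), (∀ i, (inner ℝ (a i) x : ℝ) ≤ b i) →
            (inner ℝ v x : ℝ) ≤ inner ℝ v x') → x' = xbar) ∧
        ∃ lam : Fin m → ℝ, (∀ i, 0 ≤ lam i) ∧ (∑ i, lam i • a i) = v ∧
          (∀ i, (inner ℝ (a i) xbar : ℝ) < b i → lam i = 0) ∧
          (∀ i, (inner ℝ (a i) xbar : ℝ) = b i → 0 < lam i)) := by
  have hae : ∀ᵐ v : EuclideanSpace ℝ (Fin n), ∀ I : Finset (Fin m),
      v ∉ frontier (coneOf a I) := by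
    rw [MeasureTheory.ae_all_iff]
    intro I
    rw [← MeasureTheory.measure_eq_zero_iff_ae_notMem]
    exact (coneOf_convex a I).addHaar_frontier volume
  filter_upwards [hae] with v hv xbar hfeas hopt
  set I : Finset (Fin m) := Finset.univ.filter (fun i => (inner ℝ (a i) xbar : ℝ) = b i) with hIdef
  have hmemI : ∀ i, i ∈ I ↔ (inner ℝ (a i) xbar : ℝ) = b i := by
    intro i; simp [hIdef]
  by_cases hvcl : v ∈ closure (coneOf a I)
  · -- v in interior of the cone
    have hint : v ∈ interior (coneOf a I) := by
      by_contra h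
      exact hv I ⟨hvcl, h⟩
    obtain ⟨ε, hε, hball⟩ := Metric.isOpen_iff.mp isOpen_interior v hint
    set u0 : EuclideanSpace ℝ (Fin n) := ∑ i ∈ I, a i with hu0
    set ε' : ℝ := ε / (2 * (‖u0‖ + 1)) with hε'
    have hε'pos : 0 < ε' := by
      apply div_pos hε; positivity
    have hmem : v - ε' • u0 ∈ coneOf a I := by
      apply interior_subset
      apply hball
      rw [Metric.mem_ball, dist_eq_norm]
      have : v - ε' • u0 - v = -(ε' • u0) := by abel
      rw [this, norm_neg, norm_smul, Real.norm_eq_abs, abs_of_pos hε'pos]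
      rw [hε', div_mul_eq_mul_div, div_lt_iff₀ (by positivity)]
      nlinarith [norm_nonneg u0]
    obtain ⟨μl, hμ0, hμI, hμs⟩ := hmem
    set lam : Fin m → ℝ := fun i => μl i + if i ∈ I then ε' else 0 with hlam
    have hlam0 : ∀ i, 0 ≤ lam i := by
      intro i; simp only [hlam]
      by_cases hi : i ∈ I <;> simp [hi] <;> [linarith [hμ0 i, hε'pos.le]; exact hμ0 i]
    have hlamsum : (∑ i, lam i • a i) = v := by
      have h1 : (∑ i, lam i • a i) = (∑ i, μl i • a i)
          + ∑ i, (if i ∈ I then ε' else 0) • a i := by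
        rw [← Finset.sum_add_distrib]
        exact Finset.sum_congr rfl fun i _ => by rw [hlam]; rw [add_smul]
      have h2 : (∑ i, (if i ∈ I then ε' else 0) • a i) = ε' • u0 := by
        rw [hu0, Finset.smul_sum]
        rw [show (∑ i, (if i ∈ I then ε' else 0) • a i)
            = ∑ i, (if i ∈ I then ε' • a i else 0) from
          Finset.sum_congr rfl fun i _ => by split <;> simp]
        rw [Finset.sum_ite_mem, Finset.univ_inter]
      rw [h1, h2, hμs]
      abel
    have hlamoff : ∀ i, (inner ℝ (a i) xbar : ℝ) < b i → lam i = 0 := by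
      intro i hi
      have hiI : i ∉ I := by rw [hmemI]; exact ne_of_lt hi
      simp only [hlam]; rw [hμI i hiI]; simp [hiI]
    have hlamon : ∀ i, (inner ℝ (a i) xbar : ℝ) = b i → 0 < lam i := by
      intro i hi
      have hiI : i ∈ I := (hmemI i).mpr hi
      simp only [hlam]; simp [hiI]
      linarith [hμ0 i]
    -- span is everything
    have hspan : Submodule.span ℝ (a '' ↑I) = ⊤ := by
      apply Submodule.eq_top_of_nonempty_interior'
      exact ⟨v, interior_mono (coneOf_subset_span a I) hint⟩
    -- uniqueness
    constructor
    · intro x' hx'feas hx'opt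
      have heq : (inner ℝ v x' : ℝ) = inner ℝ v xbar :=
        le_antisymm (hopt x' hx'feas) (hx'opt xbar hfeas)
      have hexp : ∀ y : EuclideanSpace ℝ (Fin n),
          (inner ℝ v y : ℝ) = ∑ i ∈ I, lam i * (inner ℝ (a i) y : ℝ) := by
        intro y
        rw [← hlamsum, sum_inner]
        rw [← Finset.sum_filter_add_sum_filter_not Finset.univ (· ∈ I)]
        have hz : ∑ i ∈ Finset.univ.filter (fun i => ¬ i ∈ I),
            (inner ℝ (lam i • a i) y : ℝ) = 0 := by
          apply Finset.sum_eq_zero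
          intro i hi
          rw [Finset.mem_filter] at hi
          have : lam i = 0 := by
            simp only [hlam]; rw [hμI i hi.2]; simp [hi.2]
          rw [this]; simp
        rw [hz, add_zero]
        rw [show Finset.univ.filter (· ∈ I) = I from by ext i; simp]
        exact Finset.sum_congr rfl fun i _ => real_inner_smul_left _ _ _
      have hterm : ∀ i ∈ I, lam i * (inner ℝ (a i) x' : ℝ) = lam i * b i := by
        rw [← Finset.sum_eq_sum_iff_of_le]
        · rw [← hexp x', heq, hexp xbar]
          exact Finset.sum_congr rfl fun i hi => by rw [(hmemI i).mp hi]
        · intro i hi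
          exact mul_le_mul_of_nonneg_left (hx'feas i) (hlam0 i)
      have hact : ∀ i ∈ I, (inner ℝ (a i) (x' - xbar) : ℝ) = 0 := by
        intro i hi
        have h1 : (inner ℝ (a i) x' : ℝ) = b i := by
          have := hterm i hi
          have hpos := hlamon i ((hmemI i).mp hi)
          exact mul_left_cancel₀ (ne_of_gt hpos) this
        rw [inner_sub_right, h1, (hmemI i).mp hi, sub_self]
      have horth : ∀ s ∈ Submodule.span ℝ (a '' ↑I),
          (inner ℝ s (x' - xbar) : ℝ) = 0 := by
        intro s hs
        induction hs using Submodule.span_induction with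
        | mem x hx => obtain ⟨i, hi, rfl⟩ := hx; exact hact i hi
        | zero => simp
        | add x y _ _ hx hy => rw [inner_add_left, hx, hy, add_zero]
        | smul c x _ hx => rw [real_inner_smul_left, hx, mul_zero]
      have : (inner ℝ (x' - xbar) (x' - xbar) : ℝ) = 0 :=
        horth _ (hspan ▸ Submodule.mem_top)
      have := inner_self_eq_zero.mp this
      exact sub_eq_zero.mp this
    · exact ⟨lam, hlam0, hlamsum, hlamoff, hlamon⟩
  · -- v not in closure: contradiction with optimality
    exfalso
    obtain ⟨f, u, hfu, huv⟩ := geometric_hahn_banach_closed_point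
      ((coneOf_convex a I).closure) isClosed_closure hvcl
    have hu0 : 0 < u := by
      have := hfu 0 (subset_closure (coneOf_zero_mem a I))
      simpa using this
    have hfle : ∀ w ∈ coneOf a I, f w ≤ 0 := by
      intro w hw
      by_contra hpos
      push_neg at hpos
      have ht : 0 ≤ (u + 1) / f w := by positivity
      have := hfu (((u + 1) / f w) • w)
        (subset_closure (coneOf_smul_mem a I ht hw))
      rw [_root_.map_smul, smul_eq_mul, div_mul_cancel₀ _ (ne_of_gt hpos)] at this
      linarith
    set d : EuclideanSpace ℝ (Fin n) := (InnerProductSpace.toDual ℝ _).symm f with hd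
    have hdi : ∀ x : EuclideanSpace ℝ (Fin n), (inner ℝ x d : ℝ) = f x := by
      intro x
      rw [real_inner_comm]
      exact InnerProductSpace.toDual_symm_apply
    set T : Fin m → ℝ := fun i =>
      if i ∈ I then 1 else (b i - (inner ℝ (a i) xbar : ℝ)) / (|f (a i)| + 1) with hT
    have hTpos : ∀ i, 0 < T i := by
      intro i
      simp only [hT]
      split
      · exact one_pos
      · next hi =>
        have hlt : (inner ℝ (a i) xbar : ℝ) < b i :=
          lt_of_le_of_ne (hfeas i) (by rw [hmemI] at hi; exact hi)
        apply div_pos (by linarith) (by positivity)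
    set s : Finset ℝ := insert 1 (Finset.image T Finset.univ) with hs
    have hsne : s.Nonempty := ⟨1, Finset.mem_insert_self _ _⟩
    set t : ℝ := s.min' hsne with ht
    have htpos : 0 < t := by
      have hmm := s.min'_mem hsne
      rcases Finset.mem_insert.mp hmm with h | h
      · rw [ht, h]; exact one_pos
      · obtain ⟨i, _, hi⟩ := Finset.mem_image.mp h
        rw [ht, ← hi]; exact hTpos i
    have htle : ∀ i, t ≤ T i := fun i =>
      Finset.min'_le s _ (Finset.mem_insert_of_mem (Finset.mem_image_of_mem T (Finset.mem_univ i)))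
    have hxfeas : ∀ i, (inner ℝ (a i) (xbar + t • d) : ℝ) ≤ b i := by
      intro i
      rw [inner_add_right, real_inner_smul_right, hdi]
      by_cases hi : i ∈ I
      · have h1 : f (a i) ≤ 0 := hfle _ (coneOf_gen_mem a I hi)
        have h2 : (inner ℝ (a i) xbar : ℝ) = b i := (hmemI i).mp hi
        nlinarith
      · have hlt : (inner ℝ (a i) xbar : ℝ) < b i :=
          lt_of_le_of_ne (hfeas i) (by rw [hmemI] at hi; exact hi)
        have h3 : t * f (a i) ≤ t * |f (a i)| :=
          mul_le_mul_of_nonneg_left (le_abs_self _) htpos.le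
        have h4 : t * |f (a i)| ≤ T i * |f (a i)| :=
          mul_le_mul_of_nonneg_right (htle i) (abs_nonneg _)
        have h5 : T i * |f (a i)| ≤ b i - (inner ℝ (a i) xbar : ℝ) := by
          simp only [hT]
          rw [if_neg hi, div_mul_eq_mul_div, div_le_iff₀ (by positivity)]
          nlinarith [abs_nonneg (f (a i))]
        linarith
    have := hopt (xbar + t • d) hxfeas
    rw [inner_add_right, real_inner_smul_right, hdi] at this
    have hfv : 0 < f v := lt_trans hu0 huv
    nlinarith
end
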